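/- Let p ≥ 1, and write the unique vector w̃ (up to sign) in the (2p+1)-dimensional quadratic space of Lusztig's Section 1.7 as w̃ = ∑_{i=0}^{2p} c_i w_i with c_{2p} ≠ 0; set c̄_i = c_i/c_{2p} and l_j = binom(2p+1, j). Then c̄_i = (-1)^{i-1}(l_0 + l_1 + ⋯ + l_i) for 0 ≤ i ≤ p-1, and c̄_i = (-1)^i (l_0 + l_1 + ⋯ + l_{2p-i}) for p ≤ i ≤ 2p. Equivalently, these are the unique solutions of the linear system ∑_{i=0}^{2p} c̄_i f_p(i - h) = 0 for h ∈ [0, 2p-1] with c̄_{2p} = 1, where f_p(u) = (2/(2p)!)∏_{k=0}^{p-1}(u²-k²). -/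

import Mathlib

open Finset PowerSeries

namespace S19

/-- partial sums of binomial coefficients -/
noncomputable def A (p m : ℕ) : ℚ := ∑ j ∈ Finset.range (m+1), (Nat.choose (2*p+1) j : ℚ)

/-- the coefficients g: G p 0 = 1, G p (t+1) = C(2p+t+1,t+1)+C(2p+t,t) -/
noncomputable def G (p : ℕ) : ℕ → ℚ
  | 0 => 1
  | t + 1 => (Nat.choose (2*p+t+1) (2*p) : ℚ) + (Nat.choose (2*p+t) (2*p) : ℚ)

noncomputable def W (p : ℕ) : ℚ⟦X⟧ :=
  rescale (-1) (PowerSeries.mk fun t => (Nat.choose (2*p + t) (2*p) : ℚ))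

lemma W_mul : ∀ p : ℕ, W p * (1 + X)^(2*p+1) = 1 := by
  intro p
  have h := mk_add_choose_mul_one_sub_pow_eq_one ℚ (2*p)
  have h2 := congrArg (rescale (-1 : ℚ)) h
  simp only [map_mul, map_pow, map_sub, map_one, rescale_neg_one_X, sub_neg_eq_add] at h2
  exact h2

lemma coeff_W (p t : ℕ) : (coeff (R := ℚ) t) (W p) = (-1)^t * (Nat.choose (2*p + t) (2*p) : ℚ) := by
  simp [W, coeff_rescale]

noncomputable def Phi (p : ℕ) : ℚ⟦X⟧ := (1 - X) * W p

lemma coeff_Phi (p t : ℕ) : (coeff (R := ℚ) t) (Phi p) = (-1)^t * G p t := by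
  cases t with
  | zero => simp [Phi, coeff_mul, coeff_W, G]
  | succ t =>
      rw [Phi, sub_mul, one_mul, map_sub, coeff_succ_X_mul, coeff_W, coeff_W, G,
        show 2*p + (t+1) = 2*p+t+1 by ring]
      ring

noncomputable def Psi (p : ℕ) : ℚ⟦X⟧ := (1 + X)^(2*p+1) * PowerSeries.mk 1

lemma coeff_one_add_X_pow (N k : ℕ) :
    (coeff (R := ℚ) k) ((1 + X)^N) = (Nat.choose N k : ℚ) := by
  have : ((1 + X)^N : ℚ⟦X⟧) = Polynomial.coeToPowerSeries.ringHom (((1 + Polynomial.X)^N : Polynomial ℚ)) := by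
    rw [map_pow, map_add, map_one, Polynomial.coeToPowerSeries.ringHom_apply, Polynomial.coe_X]
  rw [this, Polynomial.coeToPowerSeries.ringHom_apply, Polynomial.coeff_coe,
    Polynomial.coeff_one_add_X_pow]

lemma coeff_Psi (p s : ℕ) : (coeff (R := ℚ) s) (Psi p) = A p s := by
  rw [Psi, coeff_mul, Finset.Nat.sum_antidiagonal_eq_sum_range_succ_mk, A]
  refine Finset.sum_congr rfl fun a ha => ?_
  rw [coeff_one_add_X_pow, coeff_mk, Pi.one_apply, mul_one]

lemma key (p j : ℕ) (hj : 1 ≤ j) :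
    ∑ t ∈ Finset.range (j+1), (-1:ℚ)^t * G p t * A p (j - t) = 0 := by
  have hprod : Phi p * Psi p = 1 := by
    have h1 := W_mul p
    have h2 := mk_one_mul_one_sub_eq_one ℚ
    calc Phi p * Psi p = (W p * (1+X)^(2*p+1)) * ((PowerSeries.mk 1) * (1 - X)) := by
          rw [Phi, Psi]; ring
      _ = 1 := by rw [h1, h2, one_mul]
  have h3 := congrArg (coeff (R := ℚ) j) hprod
  rw [coeff_mul, Finset.Nat.sum_antidiagonal_eq_sum_range_succ_mk, coeff_one] at h3
  simp only [coeff_Phi, coeff_Psi] at h3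
  rw [if_neg (by omega)] at h3
  exact h3

lemma asc_prod (n k : ℕ) : n.ascFactorial k = ∏ i ∈ Finset.range k, (n + i) := by
  induction k with
  | zero => simp
  | succ k ih => rw [Nat.ascFactorial_succ, Finset.prod_range_succ, ih]; ring

lemma desc_prod (n k : ℕ) : n.descFactorial k = ∏ i ∈ Finset.range k, (n - i) := by
  induction k with
  | zero => simp
  | succ k ih => rw [Nat.descFactorial_succ, Finset.prod_range_succ, ih]; ring

section f
variable (p : ℕ) (hp : 1 ≤ p) (f : ℤ → ℚ)
  (hf : ∀ u : ℤ, f u = 2 / (Nat.factorial (2 * p)) *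
      ∏ k ∈ Finset.range p, ((u ^ 2 - (k : ℤ) ^ 2 : ℤ) : ℚ))

include hf

lemma feven (u : ℤ) : f (-u) = f u := by
  rw [hf, hf]; simp [neg_pow]

lemma fzero (u : ℤ) (hu : u.natAbs < p) : f u = 0 := by
  rw [hf]
  have : ∏ k ∈ Finset.range p, ((u ^ 2 - (k : ℤ) ^ 2 : ℤ) : ℚ) = 0 := by
    apply Finset.prod_eq_zero (Finset.mem_range.2 hu)
    have : u ^ 2 - (u.natAbs : ℤ) ^ 2 = 0 := by
      have := Int.natAbs_sq u
      omega
    rw [this]; norm_num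
  rw [this, mul_zero]

include hp

lemma prod_eq (t : ℕ) :
    ∏ k ∈ Finset.range p, ((((p:ℤ) + t) ^ 2 - (k : ℤ) ^ 2 : ℤ) : ℚ) =
      (((p + t).descFactorial p * (p + t).ascFactorial p : ℕ) : ℚ) := by
  have h : ∀ k ∈ Finset.range p, (((p:ℤ) + t) ^ 2 - (k : ℤ) ^ 2 : ℤ)
      = (((p + t - k) * (p + t + k) : ℕ) : ℤ) := by
    intro k hk
    have hk' : k < p := Finset.mem_range.1 hk
    have h1 : ((p + t - k : ℕ) : ℤ) = (p : ℤ) + t - k := by omega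
    push_cast [h1]
    ring
  calc ∏ k ∈ Finset.range p, ((((p:ℤ) + t) ^ 2 - (k : ℤ) ^ 2 : ℤ) : ℚ)
      = ∏ k ∈ Finset.range p, (((p + t - k) * (p + t + k) : ℕ) : ℚ) := by
        refine Finset.prod_congr rfl fun k hk => ?_
        rw [h k hk]; push_cast; ring
    _ = (((p + t).descFactorial p * (p + t).ascFactorial p : ℕ) : ℚ) := by
        simp only [desc_prod, asc_prod]
        push_cast
        rw [← Finset.prod_mul_distrib]

lemma fG : ∀ t : ℕ, f ((p:ℤ) + t) = G p t := by
  intro t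
  rw [hf, prod_eq p hp f hf t]
  cases t with
  | zero =>
    have hd : (p).descFactorial p = Nat.factorial p := Nat.descFactorial_self p
    have ha : Nat.factorial (p-1) * (p).ascFactorial p = Nat.factorial (2*p - 1) := by
      have h := Nat.factorial_mul_ascFactorial (p-1) p
      rw [show p - 1 + 1 = p by omega, show p - 1 + p = 2*p - 1 by omega] at h
      exact h
    have key : 2 * ((p).descFactorial p * (p).ascFactorial p) = Nat.factorial (2*p) := by
      rw [hd]
      have h2 : Nat.factorial (2*p) = (2*p) * Nat.factorial (2*p-1) := by
        conv_lhs => rw [show 2*p = (2*p-1)+1 by omega]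
        rw [Nat.factorial_succ, show 2*p-1+1 = 2*p by omega]
      have h3 : Nat.factorial p = p * Nat.factorial (p-1) := by
        conv_lhs => rw [show p = (p-1)+1 by omega]
        rw [Nat.factorial_succ, show p-1+1 = p by omega]
      rw [h2, h3, ← ha]
      ring
    have hne : (Nat.factorial (2*p) : ℚ) ≠ 0 := by exact_mod_cast (Nat.factorial_ne_zero _)
    simp only [Nat.add_zero, G]
    rw [div_mul_eq_mul_div, div_eq_one_iff_eq hne]
    exact_mod_cast congrArg (Nat.cast : ℕ → ℚ) key
  | succ t =>
    have hd : Nat.factorial (t+1) * (p+(t+1)).descFactorial p = Nat.factorial (p+t+1) := by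
      have h := Nat.factorial_mul_descFactorial (show p ≤ p + (t+1) by omega)
      rw [show p + (t+1) - p = t+1 by omega] at h
      rw [h, ← Nat.add_assoc]
    have ha : Nat.factorial (p+t) * (p+(t+1)).ascFactorial p = Nat.factorial (2*p+t) := by
      have h := Nat.factorial_mul_ascFactorial (p+t) p
      rw [show p + t + 1 = p + (t+1) by omega, show p + t + p = 2*p+t by omega] at h
      exact h
    have hQd : ((p+(t+1)).descFactorial p : ℚ)
        = (Nat.factorial (p+t+1) : ℚ) / (Nat.factorial (t+1) : ℚ) := by
      rw [eq_div_iff (by exact_mod_cast (Nat.factorial_ne_zero (t+1)))]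
      rw [mul_comm]
      exact_mod_cast congrArg (Nat.cast : ℕ → ℚ) hd
    have hQa : ((p+(t+1)).ascFactorial p : ℚ)
        = (Nat.factorial (2*p+t) : ℚ) / (Nat.factorial (p+t) : ℚ) := by
      rw [eq_div_iff (by exact_mod_cast (Nat.factorial_ne_zero (p+t)))]
      rw [mul_comm]
      exact_mod_cast congrArg (Nat.cast : ℕ → ℚ) ha
    have hc1 : (Nat.choose (2*p+t+1) (2*p) : ℚ)
        = (Nat.factorial (2*p+t+1) : ℚ) / ((Nat.factorial (2*p) : ℚ) * (Nat.factorial (t+1) : ℚ)) := by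
      rw [Nat.cast_choose ℚ (show 2*p ≤ 2*p+t+1 by omega)]
      rw [show 2*p+t+1-2*p = t+1 by omega]
    have hc2 : (Nat.choose (2*p+t) (2*p) : ℚ)
        = (Nat.factorial (2*p+t) : ℚ) / ((Nat.factorial (2*p) : ℚ) * (Nat.factorial t : ℚ)) := by
      rw [Nat.cast_choose ℚ (show 2*p ≤ 2*p+t by omega)]
      rw [show 2*p+t-2*p = t by omega]
    rw [G, hc1, hc2]
    push_cast [hQd, hQa]
    have e1 : (Nat.factorial (2*p+t+1) : ℚ) = (2*(p:ℚ)+t+1) * (Nat.factorial (2*p+t) : ℚ) := by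
      rw [show 2*p+t+1 = (2*p+t)+1 by omega, Nat.factorial_succ]; push_cast; ring
    have e2 : (Nat.factorial (p+t+1) : ℚ) = ((p:ℚ)+t+1) * (Nat.factorial (p+t) : ℚ) := by
      rw [show p+t+1 = (p+t)+1 by omega, Nat.factorial_succ]; push_cast; ring
    have e3 : (Nat.factorial (t+1) : ℚ) = ((t:ℚ)+1) * (Nat.factorial t : ℚ) := by
      rw [Nat.factorial_succ]; push_cast; ring
    rw [e1, e2, e3]
    have n1 : (Nat.factorial (2*p) : ℚ) ≠ 0 := by exact_mod_cast Nat.factorial_ne_zero _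
    have n2 : (Nat.factorial (p+t) : ℚ) ≠ 0 := by exact_mod_cast Nat.factorial_ne_zero _
    have n3 : (Nat.factorial t : ℚ) ≠ 0 := by exact_mod_cast Nat.factorial_ne_zero _
    have n4 : ((t:ℚ)+1) ≠ 0 := by positivity
    field_simp
    ring

end f

end S19

theorem stmt19 (p : ℕ) (hp : 1 ≤ p)
    (f : ℤ → ℚ)
    (hf : ∀ u : ℤ, f u = 2 / (Nat.factorial (2 * p)) *
      ∏ k ∈ Finset.range p, ((u ^ 2 - (k : ℤ) ^ 2 : ℤ) : ℚ))
    (c : ℕ → ℚ) (hc : c (2 * p) = 1)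
    (hsys : ∀ h ∈ Finset.range (2 * p),
      ∑ i ∈ Finset.range (2 * p + 1), c i * f ((i : ℤ) - (h : ℤ)) = 0) :
    (∀ i, i ≤ p - 1 →
      c i = (-1 : ℚ) ^ (i + 1) *
        ∑ j ∈ Finset.range (i + 1), (Nat.choose (2 * p + 1) j : ℚ)) ∧
    (∀ i, p ≤ i → i ≤ 2 * p →
      c i = (-1 : ℚ) ^ i *
        ∑ j ∈ Finset.range (2 * p - i + 1), (Nat.choose (2 * p + 1) j : ℚ)) := by
  have A0 : S19.A p 0 = 1 := by simp [S19.A]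
  have hG0 : S19.G p 0 = 1 := rfl
  have hfz := S19.fzero p f hf
  have hfe := S19.feven p f hf
  have hfG := S19.fG p hp f hf
  have hfp : f (p:ℤ) = 1 := by
    have h := hfG 0
    rw [show ((p:ℤ) + ((0:ℕ):ℤ)) = (p:ℤ) by push_cast; ring] at h
    rw [h, hG0]
  have hsgn : ∀ a b : ℕ, b ≤ a → (-1:ℚ)^(a-b) = (-1)^a * (-1)^b := by
    intro a b h
    have h2 : (-1:ℚ)^b * (-1)^b = 1 := by
      rw [← pow_add]; exact Even.neg_one_pow ⟨b, rfl⟩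
    calc (-1:ℚ)^(a-b) = (-1)^(a-b) * ((-1)^b * (-1)^b) := by rw [h2, mul_one]
      _ = (-1)^(a-b+b) * (-1)^b := by rw [pow_add]; ring
      _ = (-1)^a * (-1)^b := by rw [Nat.sub_add_cancel h]
  -- upper part
  have hU : ∀ j, j ≤ p → c (2*p - j) = (-1:ℚ)^j * S19.A p j := by
    intro j
    induction j using Nat.strong_induction_on with
    | _ j IH =>
      intro hjp
      rcases Nat.eq_zero_or_pos j with h0 | h1
      · subst h0
        simpa [A0] using hc
      · have hmem : p - j ∈ Finset.range (2*p) := Finset.mem_range.2 (by omega)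
        have heq := hsys (p-j) hmem
        rw [show 2*p+1 = (2*p-j) + (j+1) by omega, Finset.sum_range_add] at heq
        have hz : ∑ i ∈ Finset.range (2*p-j), c i * f ((i:ℤ) - ((p-j:ℕ):ℤ)) = 0 := by
          apply Finset.sum_eq_zero
          intro i hi
          have hi' : i < 2*p - j := Finset.mem_range.1 hi
          rw [hfz _ (by omega), mul_zero]
        rw [hz, zero_add] at heq
        have hcong : ∀ t ∈ Finset.range (j+1),
            c ((2*p-j)+t) * f (((((2*p-j) + t : ℕ)):ℤ) - ((p-j:ℕ):ℤ))
              = c ((2*p-j)+t) * S19.G p t := by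
          intro t ht
          have ht' : t < j + 1 := Finset.mem_range.1 ht
          have harg : (((2*p-j) + t : ℕ):ℤ) - ((p-j:ℕ):ℤ) = (p:ℤ) + (t:ℤ) := by omega
          rw [harg, hfG t]
        rw [Finset.sum_congr rfl hcong, Finset.sum_range_succ'] at heq
        have hkey := S19.key p j h1
        rw [Finset.sum_range_succ'] at hkey
        simp only [pow_zero, one_mul, Nat.sub_zero, hG0, mul_one] at hkey
        have hsum : ∑ t ∈ Finset.range j, c ((2*p-j)+(t+1)) * S19.G p (t+1)
            = -((-1:ℚ)^j * S19.A p j) := by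
          have hstep : ∑ t ∈ Finset.range j, c ((2*p-j)+(t+1)) * S19.G p (t+1)
              = ∑ t ∈ Finset.range j,
                  ((-1:ℚ)^j * ((-1:ℚ)^(t+1) * S19.G p (t+1) * S19.A p (j-(t+1)))) := by
            apply Finset.sum_congr rfl
            intro t ht
            have ht' : t < j := Finset.mem_range.1 ht
            rw [show (2*p-j)+(t+1) = 2*p - (j-(t+1)) by omega,
              IH (j-(t+1)) (by omega) (by omega), hsgn j (t+1) (by omega)]
            ring
          rw [hstep, ← Finset.mul_sum]
          have h2 : ∑ t ∈ Finset.range j,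
              ((-1:ℚ)^(t+1) * S19.G p (t+1) * S19.A p (j-(t+1))) = -(S19.A p j) := by
            linarith [hkey]
          rw [h2]; ring
        rw [hsum] at heq
        simp only [Nat.add_zero, hG0, mul_one] at heq
        linarith [heq]
  -- c 0
  have hc0 : c 0 = -1 := by
    have hmem : p ∈ Finset.range (2*p) := Finset.mem_range.2 (by omega)
    have heq := hsys p hmem
    rw [Finset.sum_range_succ] at heq
    have hz : ∑ i ∈ Finset.range (2*p), c i * f ((i:ℤ) - (p:ℤ)) = c 0 * f (((0:ℕ):ℤ) - (p:ℤ)) := by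
      apply Finset.sum_eq_single_of_mem 0 (Finset.mem_range.2 (by omega))
      intro i hi hne
      have hi' : i < 2*p := Finset.mem_range.1 hi
      rw [hfz _ (by omega), mul_zero]
    rw [hz] at heq
    have h1 : f (((0:ℕ):ℤ) - (p:ℤ)) = 1 := by
      rw [show (((0:ℕ):ℤ) - (p:ℤ)) = -(p:ℤ) by omega, hfe, hfp]
    have h2 : f (((2*p:ℕ):ℤ) - (p:ℤ)) = 1 := by
      rw [show (((2*p:ℕ):ℤ) - (p:ℤ)) = (p:ℤ) by omega, hfp]
    rw [h1, h2, hc] at heq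
    linarith [heq]
  -- lower part
  have hL : ∀ i, i < p → c i = (-1:ℚ)^(i+1) * S19.A p i := by
    intro i
    induction i using Nat.strong_induction_on with
    | _ i IH =>
      intro hip
      rcases Nat.eq_zero_or_pos i with h0 | h1
      · subst h0
        rw [hc0, A0]; norm_num
      · have hmem : p + i ∈ Finset.range (2*p) := Finset.mem_range.2 (by omega)
        have heq := hsys (p+i) hmem
        rw [show 2*p+1 = (i+1) + (2*p-i) by omega, Finset.sum_range_add] at heq
        have hz : ∑ k ∈ Finset.range (2*p-i),
            c ((i+1)+k) * f ((((i+1)+k : ℕ):ℤ) - ((p+i:ℕ):ℤ)) = 0 := by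
          apply Finset.sum_eq_zero
          intro k hk
          have hk' : k < 2*p - i := Finset.mem_range.1 hk
          rw [hfz _ (by omega), mul_zero]
        rw [hz, add_zero] at heq
        have hcong : ∀ k ∈ Finset.range (i+1),
            c k * f ((k:ℤ) - ((p+i:ℕ):ℤ)) = c k * S19.G p (i-k) := by
          intro k hk
          have hk' : k < i + 1 := Finset.mem_range.1 hk
          have harg : ((k:ℤ) - ((p+i:ℕ):ℤ)) = -((p:ℤ) + ((i-k:ℕ):ℤ)) := by omega
          rw [harg, hfe, hfG]
        rw [Finset.sum_congr rfl hcong, Finset.sum_range_succ] at heq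
        have hkey := S19.key p i h1
        rw [Finset.sum_range_succ'] at hkey
        simp only [pow_zero, one_mul, Nat.sub_zero, hG0, mul_one] at hkey
        have hsum : ∑ k ∈ Finset.range i, c k * S19.G p (i-k)
            = -((-1:ℚ)^(i+1) * S19.A p i) := by
          have hrefl : ∑ k ∈ Finset.range i, c k * S19.G p (i-k)
              = ∑ t ∈ Finset.range i, c (i-1-t) * S19.G p (i-(i-1-t)) :=
            (Finset.sum_range_reflect (fun k => c k * S19.G p (i-k)) i).symm
          rw [hrefl]
          have hstep : ∀ t ∈ Finset.range i,
              c (i-1-t) * S19.G p (i-(i-1-t))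
                = (-1:ℚ)^(i+1) * ((-1:ℚ)^(t+1) * S19.G p (t+1) * S19.A p (i-(t+1))) := by
            intro t ht
            have ht' : t < i := Finset.mem_range.1 ht
            rw [show i-(i-1-t) = t+1 by omega,
              IH (i-1-t) (by omega) (by omega), show i-1-t = i-(t+1) by omega,
              pow_succ, pow_succ, hsgn i (t+1) (by omega)]
            ring
          rw [Finset.sum_congr rfl hstep, ← Finset.mul_sum]
          have h2 : ∑ t ∈ Finset.range i,
              ((-1:ℚ)^(t+1) * S19.G p (t+1) * S19.A p (i-(t+1))) = -(S19.A p i) := by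
            linarith [hkey]
          rw [h2]; ring
        rw [hsum, Nat.sub_self, hG0, mul_one] at heq
        linarith [heq]
  refine ⟨?_, ?_⟩
  · intro i hi
    have h := hL i (by omega)
    rw [h]; rfl
  · intro i hpi hi2
    have h := hU (2*p - i) (by omega)
    rw [show 2*p - (2*p - i) = i by omega] at h
    rw [h, hsgn (2*p) i (by omega), Even.neg_one_pow ⟨p, by ring⟩, one_mul]
    rfl
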